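/- Let p be real with 7/8 ≤ p ≤ 1 and define c_k = 2(1−p)/(2p−1) − C_k(p). Then for every k ≥ 2, c_k ≤ 5(1−p)/(4(2p−1)). -/
import Mathlib

set_option maxHeartbeats 1600000

/-- Inductive step: if `3(1-p) ≤ 4(2p-1)x`, `(2p-1)x ≤ 2(1-p)` and likewise for `z`,
where `z` is the Fitch successor of `(x, d)` and `w` the successor of `(z, (2p-1)(1+x)d)`,
then the same bounds hold for `w`. -/
lemma fitch_key (p x z d w : ℝ) (hp1 : 7 / 8 ≤ p) (hp2 : p ≤ 1)
    (hx1 : 3 * (1 - p) ≤ 4 * ((2 * p - 1) * x)) (hx2 : (2 * p - 1) * x ≤ 2 * (1 - p))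
    (hz1 : 3 * (1 - p) ≤ 4 * ((2 * p - 1) * z)) (hz2 : (2 * p - 1) * z ≤ 2 * (1 - p))
    (hz : 2 * z = 1 - 2 * x + 3 * x ^ 2 - (2 * p - 1) ^ 2 * d ^ 2)
    (hw : 2 * w = 1 - 2 * z + 3 * z ^ 2 - (2 * p - 1) ^ 2 * ((2 * p - 1) * (1 + x) * d) ^ 2) :
    3 * (1 - p) ≤ 4 * ((2 * p - 1) * w) ∧ (2 * p - 1) * w ≤ 2 * (1 - p) := by
  have hd : (2 * p - 1) ^ 2 * d ^ 2 = 1 - 2 * x + 3 * x ^ 2 - 2 * z := by linarith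
  have hw' : 2 * w = 1 - 2 * z + 3 * z ^ 2
      - (2 * p - 1) ^ 2 * (1 + x) ^ 2 * (1 - 2 * x + 3 * x ^ 2 - 2 * z) := by
    linear_combination hw - (2 * p - 1) ^ 2 * (1 + x) ^ 2 * hd
  have hq : (0 : ℝ) ≤ 1 - p := by linarith
  have hs : (3 : ℝ) / 4 ≤ 2 * p - 1 := by linarith
  have hA0 : 0 ≤ 2 * (1 - p) - (2 * p - 1) * x := by linarith
  have hA1 : 4 * (2 * (1 - p) - (2 * p - 1) * x) ≤ 5 * (1 - p) := by linarith
  have hB0 : 0 ≤ 2 * (1 - p) - (2 * p - 1) * z := by linarith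
  have hB1 : 4 * (2 * (1 - p) - (2 * p - 1) * z) ≤ 5 * (1 - p) := by linarith
  have hy : 0 ≤ 1 - 2 * x + 3 * x ^ 2 - 2 * z := by
    nlinarith [sq_nonneg d, sq_nonneg (2 * p - 1)]
  constructor
  · -- lower bound: 3(1-p) ≤ 4(2p-1)w
    have hid : 4 * (2 * p - 1) ^ 2 * w - 3 * (1 - p) * (2 * p - 1) =
        2 * ( ((2 * p - 1) * x - 3 * (1 - p) / 4)
                * (2 * (2 * p - 1) - 3 * ((2 * p - 1) * x) - 9 * (1 - p) / 4)
            + (3 * ((2 * p - 1) * z) ^ 2 - 27 * (1 - p) ^ 2 / 16)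
            + (2 * (1 - p) - (2 * p - 1) * x) * (1 + (2 * p - 1) * (1 + x))
                * ((2 * p - 1) ^ 2 * (1 - 2 * x + 3 * x ^ 2 - 2 * z)) ) := by
      linear_combination 2 * (2 * p - 1) ^ 2 * hw'
    have t1 : 0 ≤ ((2 * p - 1) * x - 3 * (1 - p) / 4)
        * (2 * (2 * p - 1) - 3 * ((2 * p - 1) * x) - 9 * (1 - p) / 4) := by
      apply mul_nonneg
      · linarith
      · linarith
    have t2 : 0 ≤ 3 * ((2 * p - 1) * z) ^ 2 - 27 * (1 - p) ^ 2 / 16 := by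
      nlinarith [hz1, hq]
    have t3 : 0 ≤ (2 * (1 - p) - (2 * p - 1) * x) * (1 + (2 * p - 1) * (1 + x))
        * ((2 * p - 1) ^ 2 * (1 - 2 * x + 3 * x ^ 2 - 2 * z)) := by
      apply mul_nonneg
      · apply mul_nonneg hA0
        nlinarith
      · exact mul_nonneg (sq_nonneg _) hy
    nlinarith [hid, t1, t2, t3, hs]
  · -- upper bound: (2p-1)w ≤ 2(1-p)
    have hid : 4 * (1 - p) * (2 * p - 1) - 2 * (2 * p - 1) ^ 2 * w =
        (2 * (1 - p) - (2 * p - 1) * z) * (12 * (1 - p)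
            - 3 * (2 * (1 - p) - (2 * p - 1) * z) - 4 * (2 * (1 - p) - (2 * p - 1) * x))
        + 8 * (1 - p) * (2 * (1 - p) - (2 * p - 1) * x) * (1 - 8 * (1 - p))
        + (2 * (1 - p) - (2 * p - 1) * x) * (2 * (1 - p) - (2 * p - 1) * z)
            * (2 * (2 * (1 - p) - (2 * p - 1) * x) + 8 * (1 - p)
               - 4 * (1 - p) * (2 * (1 - p) - (2 * p - 1) * x))
        + (2 * (1 - p) - (2 * p - 1) * x) ^ 2
            * (4 * (5 * (1 - p) - (2 * (1 - p) - (2 * p - 1) * x))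
               + 16 * (1 - p) * (2 * (1 - p) - (2 * (1 - p) - (2 * p - 1) * x))
               + 3 * (2 * (1 - p) - (2 * p - 1) * x) ^ 2) := by
      linear_combination (-(2 * p - 1) ^ 2) * hw'
    have t1 : 0 ≤ (2 * (1 - p) - (2 * p - 1) * z) * (12 * (1 - p)
        - 3 * (2 * (1 - p) - (2 * p - 1) * z) - 4 * (2 * (1 - p) - (2 * p - 1) * x)) := by
      apply mul_nonneg hB0; linarith
    have t2 : 0 ≤ 8 * (1 - p) * (2 * (1 - p) - (2 * p - 1) * x) * (1 - 8 * (1 - p)) := by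
      apply mul_nonneg (by positivity); linarith
    have t3 : 0 ≤ (2 * (1 - p) - (2 * p - 1) * x) * (2 * (1 - p) - (2 * p - 1) * z)
        * (2 * (2 * (1 - p) - (2 * p - 1) * x) + 8 * (1 - p)
           - 4 * (1 - p) * (2 * (1 - p) - (2 * p - 1) * x)) := by
      apply mul_nonneg (mul_nonneg hA0 hB0)
      nlinarith [hA1, hq]
    have t4 : 0 ≤ (2 * (1 - p) - (2 * p - 1) * x) ^ 2
        * (4 * (5 * (1 - p) - (2 * (1 - p) - (2 * p - 1) * x))
           + 16 * (1 - p) * (2 * (1 - p) - (2 * (1 - p) - (2 * p - 1) * x))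
           + 3 * (2 * (1 - p) - (2 * p - 1) * x) ^ 2) := by
      apply mul_nonneg (sq_nonneg _)
      have h1 : 0 ≤ 5 * (1 - p) - (2 * (1 - p) - (2 * p - 1) * x) := by linarith
      have h2 : 0 ≤ 2 * (1 - p) - (2 * (1 - p) - (2 * p - 1) * x) := by linarith
      nlinarith [mul_nonneg hq h2, sq_nonneg (2 * (1 - p) - (2 * p - 1) * x)]
    nlinarith [hid, t1, t2, t3, t4, hs]

/-- For 7/8 ≤ p ≤ 1 and k ≥ 2, c_k = 2(1-p)/(2p-1) - C_k ≤ 5(1-p)/(4(2p-1)). -/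
theorem fitch_c_upper_bound
    (p : ℝ) (C D : ℕ → ℝ)
    (hC0 : C 0 = 0) (hD0 : D 0 = 1)
    (hC : ∀ n, 2 * C (n + 1) =
        1 - 2 * C n + 3 * (C n) ^ 2 - (2 * p - 1) ^ 2 * (D n) ^ 2)
    (hD : ∀ n, D (n + 1) = (2 * p - 1) * (1 + C n) * D n)
    (hp1 : 7 / 8 ≤ p) (hp2 : p ≤ 1)
    (k : ℕ) (hk : 2 ≤ k) :
    2 * (1 - p) / (2 * p - 1) - C k ≤ 5 * (1 - p) / (4 * (2 * p - 1)) := by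
  have hq : (0 : ℝ) ≤ 1 - p := by linarith
  have hq8 : 1 - p ≤ 1 / 8 := by linarith
  have hs : (3 : ℝ) / 4 ≤ 2 * p - 1 := by linarith
  have hC1 : C 1 = 2 * p * (1 - p) := by
    have h := hC 0
    rw [hC0, hD0] at h
    nlinarith [h]
  have hD1 : D 1 = 2 * p - 1 := by
    have h := hD 0
    rw [hC0, hD0] at h
    linarith [h]
  -- bounds for C 1
  have h1a : 3 * (1 - p) ≤ 4 * ((2 * p - 1) * C 1) := by
    have e : 4 * ((2 * p - 1) * C 1) - 3 * (1 - p)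
        = (1 - p) * (5 - 24 * (1 - p) + 16 * (1 - p) ^ 2) := by
      rw [hC1]; ring
    nlinarith [e, mul_nonneg hq (show (0:ℝ) ≤ 5 - 24 * (1 - p) + 16 * (1 - p) ^ 2 by
      nlinarith [sq_nonneg (1 - p)])]
  have h1b : (2 * p - 1) * C 1 ≤ 2 * (1 - p) := by
    have e : 2 * (1 - p) - (2 * p - 1) * C 1
        = 2 * (1 - p) ^ 2 * (3 - 2 * (1 - p)) := by
      rw [hC1]; ring
    nlinarith [e, mul_nonneg (mul_nonneg (by norm_num : (0:ℝ) ≤ 2) (sq_nonneg (1 - p)))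
      (show (0:ℝ) ≤ 3 - 2 * (1 - p) by linarith)]
  -- bounds for C 2
  have h2 := hC 1
  rw [hC1, hD1] at h2
  have h2a : 3 * (1 - p) ≤ 4 * ((2 * p - 1) * C 2) := by
    have e : 4 * ((2 * p - 1) * C 2) - 3 * (1 - p)
        = (1 - p) * (5 - 32 * (1 - p) + 48 * (1 - p) ^ 2 - 40 * (1 - p) ^ 3
            + 16 * (1 - p) ^ 4) := by
      linear_combination 2 * (2 * p - 1) * h2
    have hb : (0:ℝ) ≤ 5 - 32 * (1 - p) + 48 * (1 - p) ^ 2 - 40 * (1 - p) ^ 3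
        + 16 * (1 - p) ^ 4 := by
      nlinarith [sq_nonneg (1 - p), mul_nonneg (mul_nonneg hq hq) hq,
        sq_nonneg ((1 - p) ^ 2)]
    nlinarith [e, mul_nonneg hq hb]
  have h2b : (2 * p - 1) * C 2 ≤ 2 * (1 - p) := by
    have e : 2 * (1 - p) - (2 * p - 1) * C 2
        = (1 - p) ^ 2 * (16 - 24 * (1 - p) + 20 * (1 - p) ^ 2 - 8 * (1 - p) ^ 3) / 2 := by
      linear_combination (-(2 * p - 1) / 2) * h2
    have hb : (0:ℝ) ≤ 16 - 24 * (1 - p) + 20 * (1 - p) ^ 2 - 8 * (1 - p) ^ 3 := by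
      nlinarith [sq_nonneg (1 - p), mul_nonneg (mul_nonneg hq hq) hq]
    nlinarith [e, mul_nonneg (sq_nonneg (1 - p)) hb]
  -- induction
  have main : ∀ n : ℕ, (3 * (1 - p) ≤ 4 * ((2 * p - 1) * C (n + 1)) ∧
      (2 * p - 1) * C (n + 1) ≤ 2 * (1 - p)) ∧
      (3 * (1 - p) ≤ 4 * ((2 * p - 1) * C (n + 2)) ∧
      (2 * p - 1) * C (n + 2) ≤ 2 * (1 - p)) := by
    intro n
    induction n with
    | zero => exact ⟨⟨h1a, h1b⟩, ⟨h2a, h2b⟩⟩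
    | succ m ih =>
      refine ⟨ih.2, ?_⟩
      have hrec1 := hC (m + 1)
      have hrec2 := hC (m + 2)
      have hDrec := hD (m + 1)
      rw [hDrec] at hrec2
      exact fitch_key p (C (m + 1)) (C (m + 2)) (D (m + 1)) (C (m + 3))
        hp1 hp2 ih.1.1 ih.1.2 ih.2.1 ih.2.2 hrec1 hrec2
  obtain ⟨m, rfl⟩ : ∃ m, k = m + 2 := ⟨k - 2, by omega⟩
  have hbound := (main m).2.1
  have hs0 : (0 : ℝ) < 2 * p - 1 := by linarith
  have h4s : (0 : ℝ) < 4 * (2 * p - 1) := by linarith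
  have heq : 2 * (1 - p) / (2 * p - 1) - C (m + 2)
      = (2 * (1 - p) - (2 * p - 1) * C (m + 2)) / (2 * p - 1) := by
    field_simp
  rw [heq, div_le_div_iff₀ hs0 h4s]
  nlinarith [hbound, hs0, mul_le_mul_of_nonneg_left hbound hs0.le]
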